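/- Let I be an ideal of a Noetherian ring R such that for all primes P ⊇ I, the function k ↦ depth(R_P/I^k R_P) is non-increasing. Then I satisfies the persistence property: if P ∈ Ass(I^k) then P ∈ Ass(I^{k+1}). -/

import Mathlib

open Submodule IsLocalRing Pointwise RingTheory.Sequence

attribute [local instance] Classical.propDecidable

section Infrastructure

variable {A : Type} [CommRing A] {M : Type} [AddCommGroup M] [Module A M]





lemma my_mem_smul_top_iff {r : A} {a : M} :
    a ∈ r • (⊤ : Submodule A M) ↔ ∃ y, r • y = a := by
  constructor
  · rintro h
    rw [← SetLike.mem_coe, Submodule.coe_pointwise_smul] at h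
    obtain ⟨y, -, rfl⟩ := h
    exact ⟨y, rfl⟩
  · rintro ⟨y, rfl⟩
    exact Submodule.smul_mem_pointwise_smul y r ⊤ trivial

lemma my_map_mkQ_self (N : Submodule A M) : Submodule.map N.mkQ N = ⊥ := by
  rw [eq_bot_iff]
  rintro z ⟨y, hy, rfl⟩
  simpa using (Submodule.Quotient.mk_eq_zero N).mpr hy

lemma colon_eq_ann (x : M) :
    (⊥ : Submodule A M).colon ({x} : Set M) = (A ∙ x).annihilator := by
  ext r
  rw [Submodule.mem_colon_singleton, Submodule.mem_bot,
    Submodule.mem_annihilator_span_singleton]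

lemma ap_dest [IsNoetherianRing A] {I : Ideal A} (h : I ∈ associatedPrimes A M) :
    I.IsPrime ∧ ∃ x : M, I = (A ∙ x).annihilator := by
  obtain ⟨hI, x, hx⟩ := (isAssociatedPrime_iff (I := I) (M := M)).mp h
  exact ⟨hI, x, hx.trans (colon_eq_ann x)⟩

lemma ap_mk {I : Ideal A} {x : M} (hI : I.IsPrime) (h : I = (A ∙ x).annihilator) :
    IsAssociatedPrime I M :=
  ⟨hI, x, by rw [colon_eq_ann, ← h, hI.radical]⟩

lemma ass_quotient_subset [IsNoetherianRing A] (N : Submodule A M) (x : M)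
    (hp : ((A ∙ (N.mkQ x)).annihilator).IsPrime) :
    associatedPrimes A (M ⧸ N) ⊆
      insert ((A ∙ (N.mkQ x)).annihilator)
        (associatedPrimes A (M ⧸ (N ⊔ (A ∙ x)))) := by
  rintro q hq0
  obtain ⟨hq, z, rfl⟩ := ap_dest hq0
  set x' := N.mkQ x with hx'
  by_cases hK : ∃ w : M ⧸ N, w ≠ 0 ∧ w ∈ (A ∙ z) ⊓ (A ∙ x')
  · left
    obtain ⟨w, hw0, hwz, hwx⟩ := hK
    obtain ⟨c, rfl⟩ := Submodule.mem_span_singleton.mp hwz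
    obtain ⟨b, hb⟩ := Submodule.mem_span_singleton.mp hwx
    have hcq : c ∉ (A ∙ z).annihilator := fun hck => hw0 <|
      (Submodule.mem_annihilator_span_singleton z c).mp hck
    have hbp : b ∉ (A ∙ x').annihilator := fun hbk => hw0 <|
      hb ▸ (Submodule.mem_annihilator_span_singleton x' b).mp hbk
    ext e
    rw [Submodule.mem_annihilator_span_singleton,
      Submodule.mem_annihilator_span_singleton]
    constructor
    · intro he
      have hew : e • (b • x') = 0 := by
        rw [hb, smul_comm, he, smul_zero]
      have hbe : b * e ∈ (A ∙ x').annihilator := by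
        rw [Submodule.mem_annihilator_span_singleton, mul_comm, mul_smul]
        exact hew
      rcases hp.mem_or_mem hbe with h | h
      · exact absurd h hbp
      · exact (Submodule.mem_annihilator_span_singleton x' e).mp h
    · intro he
      have hew : e • (c • z) = 0 := by
        rw [← hb, smul_comm, he, smul_zero]
      have hec : c * e ∈ (A ∙ z).annihilator := by
        rw [Submodule.mem_annihilator_span_singleton, mul_comm, mul_smul]
        exact hew
      rcases hq.mem_or_mem hec with h | h
      · exact absurd h hcq
      · exact (Submodule.mem_annihilator_span_singleton z e).mp h
  · right
    push_neg at hK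
    have hmap : Submodule.map N.mkQ (N ⊔ (A ∙ x)) = (A ∙ x') := by
      rw [Submodule.map_sup, my_map_mkQ_self, bot_sup_eq, Submodule.map_span,
        Set.image_singleton]
    have hass : IsAssociatedPrime ((A ∙ z).annihilator)
        ((M ⧸ N) ⧸ (A ∙ x')) := by
      refine ap_mk hq (x := Submodule.Quotient.mk z) ?_
      ext e
      rw [Submodule.mem_annihilator_span_singleton,
        Submodule.mem_annihilator_span_singleton, ← Submodule.Quotient.mk_smul,
        Submodule.Quotient.mk_eq_zero]
      constructor
      · intro he
        rw [he]; exact zero_mem _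
      · intro he
        by_contra hne
        exact hK (e • z) hne
          ⟨Submodule.smul_mem _ e (Submodule.mem_span_singleton_self z), he⟩
    rw [← hmap] at hass
    exact hass.map_of_injective
      (Submodule.quotientQuotientEquivQuotient N (N ⊔ (A ∙ x)) le_sup_left).toLinearMap
      (LinearEquiv.injective _)



lemma assFinite [IsNoetherianRing A] [IsNoetherian A M] :
    (associatedPrimes A M).Finite := by
  have key : ∀ N : Submodule A M, (associatedPrimes A (M ⧸ N)).Finite := by
    intro N
    induction N using IsNoetherian.induction with
    | _ N ih =>
      by_cases hN : N = ⊤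
      · subst hN
        haveI : Subsingleton (M ⧸ (⊤ : Submodule A M)) :=
          Submodule.Quotient.subsingleton_iff.mpr rfl
        rw [associatedPrimes.eq_empty_of_subsingleton]
        exact Set.finite_empty
      · haveI : Nontrivial (M ⧸ N) :=
          Submodule.Quotient.nontrivial_iff.mpr hN
        obtain ⟨p, hp⟩ := associatedPrimes.nonempty A (M ⧸ N)
        obtain ⟨hprime, x', hx'⟩ := ap_dest hp
        obtain ⟨x, rfl⟩ := N.mkQ_surjective x'
        have hx0 : N.mkQ x ≠ 0 := by
          rintro h
          rw [h] at hx'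
          rw [show (A ∙ (0 : M ⧸ N)) = ⊥ by simp, Submodule.annihilator_bot] at hx'
          exact hprime.ne_top hx'
        have hlt : N < N ⊔ (A ∙ x) := by
          refine lt_of_le_of_ne le_sup_left (fun h => hx0 ?_)
          have : x ∈ N := by
            rw [h]; exact Submodule.mem_sup_right (Submodule.mem_span_singleton_self x)
          simpa using (Submodule.Quotient.mk_eq_zero N).mpr this
        refine Set.Finite.subset ?_ (hx' ▸ ass_quotient_subset N x (hx' ▸ hprime))
        exact Set.Finite.insert _ (ih _ hlt)
  have := key ⊥
  exact this.subset ((LinearEquiv.AssociatedPrimes.eq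
    (Submodule.quotEquivOfEqBot (⊥ : Submodule A M) rfl)).symm ▸ subset_rfl)

lemma regKills {r : A} {u : M} (hreg : IsSMulRegular M r) (h : r • u = 0) : u = 0 :=
  hreg (show r • u = r • 0 by rw [h, smul_zero])
/-- Depth-zero characterization: if no element of the maximal ideal is regular on `M`,
then the maximal ideal is an associated prime. -/
lemma keyLem [IsLocalRing A] [IsNoetherianRing A] [IsNoetherian A M]
    (h : ∀ r ∈ maximalIdeal A, ¬ IsSMulRegular M r) :
    maximalIdeal A ∈ associatedPrimes A M := by
  have hsub : (maximalIdeal A : Set A) ⊆ ⋃ p ∈ associatedPrimes A M, (p : Set A) := by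
    rw [biUnion_associatedPrimes_eq_compl_regular]
    exact fun r hr => h r hr
  have hfin := assFinite (A := A) (M := M)
  rw [show (⋃ p ∈ associatedPrimes A M, (p : Set A)) =
      ⋃ p ∈ (hfin.toFinset : Set (Ideal A)), (id p : Ideal A) by
    simp [hfin.coe_toFinset]] at hsub
  obtain ⟨p, hps, hle⟩ := (Ideal.subset_union_prime (⊥ : Ideal A) ⊥
    (fun i hi _ _ => by
      have : i ∈ associatedPrimes A M := by simpa using hi
      exact this.isPrime)).mp hsub
  have hpm : p ∈ associatedPrimes A M := by simpa using hps
  have : p = maximalIdeal A :=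
    le_antisymm (le_maximalIdeal hpm.isPrime.ne_top) hle
  exact this ▸ hpm

lemma keyLem' [IsLocalRing A] [IsNoetherianRing A]
    (h : maximalIdeal A ∈ associatedPrimes A M) :
    ∀ r ∈ maximalIdeal A, ¬ IsSMulRegular M r := by
  obtain ⟨hprime, u, hu⟩ := ap_dest h
  have hu0 : u ≠ 0 := by
    rintro rfl
    rw [show (A ∙ (0 : M)) = ⊥ by simp, Submodule.annihilator_bot] at hu
    exact hprime.ne_top hu
  intro r hr hreg
  rw [hu] at hr
  have : r • u = 0 := (Submodule.mem_annihilator_span_singleton u r).mp hr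
  exact hu0 (regKills hreg this)

lemma prod_isSMulRegular {Y : Type} [AddCommGroup Y] [Module A Y] {r : A}
    (h : IsSMulRegular (M × Y) r) : IsSMulRegular M r ∧ IsSMulRegular Y r := by
  constructor
  · intro a b hab
    have := h (a₁ := (a, 0)) (a₂ := (b, 0)) (by simp [Prod.ext_iff, hab])
    simpa [Prod.ext_iff] using this
  · intro a b hab
    have := h (a₁ := ((0 : M), a)) (a₂ := (0, b)) (by simp [Prod.ext_iff, hab])
    simpa [Prod.ext_iff] using this

/-- If `X` and `Y` each admit a regular element in the maximal ideal,
then they admit a common one. -/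
lemma dichotomy [IsLocalRing A] [IsNoetherianRing A]
    {X Y : Type} [AddCommGroup X] [Module A X] [AddCommGroup Y] [Module A Y]
    [IsNoetherian A X] [IsNoetherian A Y]
    {x y : A} (hx : x ∈ maximalIdeal A) (hy : y ∈ maximalIdeal A)
    (hxr : IsSMulRegular X x) (hyr : IsSMulRegular Y y) :
    ∃ z ∈ maximalIdeal A, IsSMulRegular X z ∧ IsSMulRegular Y z := by
  by_contra hc
  push_neg at hc
  have hnr : ∀ r ∈ maximalIdeal A, ¬ IsSMulRegular (X × Y) r := by
    intro r hr hreg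
    obtain ⟨h1, h2⟩ := prod_isSMulRegular hreg
    exact hc r hr h1 h2
  obtain ⟨hprime, u, hu⟩ := ap_dest (keyLem hnr)
  have hu0 : u ≠ 0 := by
    rintro rfl
    rw [show (A ∙ (0 : X × Y)) = ⊥ by simp, Submodule.annihilator_bot] at hu
    exact hprime.ne_top hu
  have key : ∀ r ∈ maximalIdeal A, r • u = 0 := fun r hr =>
    (Submodule.mem_annihilator_span_singleton u r).mp (hu ▸ hr)
  by_cases h1 : u.1 = 0
  · have h2 : u.2 ≠ 0 := fun h => hu0 (Prod.ext h1 h)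
    have : y • u.2 = 0 := congrArg Prod.snd (key y hy)
    exact h2 (regKills hyr this)
  · have : x • u.1 = 0 := congrArg Prod.fst (key x hx)
    exact h1 (regKills hxr this)

/-- Kaplansky-style swap lemma. -/
lemma lemA [IsLocalRing A] [IsNoetherianRing A] [IsNoetherian A M]
    {x z : A} (hxr : IsSMulRegular M x) (hzr : IsSMulRegular M z)
    (hz : z ∈ maximalIdeal A)
    (h : ∀ r ∈ maximalIdeal A, ¬ IsSMulRegular (QuotSMulTop x M) r) :
    ∀ r ∈ maximalIdeal A, ¬ IsSMulRegular (QuotSMulTop z M) r := by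
  obtain ⟨hprime, ubar, hu⟩ := ap_dest (keyLem h)
  have hu0 : ubar ≠ 0 := by
    rintro rfl
    rw [show (A ∙ (0 : QuotSMulTop x M)) = ⊥ by simp, Submodule.annihilator_bot] at hu
    exact hprime.ne_top hu
  obtain ⟨u, rfl⟩ := Submodule.Quotient.mk_surjective _ ubar
  have humem : u ∉ x • (⊤ : Submodule A M) := fun hm =>
    hu0 ((Submodule.Quotient.mk_eq_zero _).mpr hm)
  have hannu : ∀ t ∈ maximalIdeal A, t • u ∈ x • (⊤ : Submodule A M) := by
    intro t ht
    rw [hu] at ht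
    have := (Submodule.mem_annihilator_span_singleton _ t).mp ht
    rwa [← Submodule.Quotient.mk_smul, Submodule.Quotient.mk_eq_zero] at this
  obtain ⟨w, hw⟩ := my_mem_smul_top_iff.mp (hannu z hz)
  -- hw : x • w = z • u
  have hwmem : w ∉ z • (⊤ : Submodule A M) := by
    rintro hm
    obtain ⟨v, rfl⟩ := my_mem_smul_top_iff.mp hm
    -- x • (z • v) = z • u  ⇒ u = x • v
    rw [smul_comm] at hw
    have : u = x • v := hzr hw.symm
    exact humem (this ▸ my_mem_smul_top_iff.mpr ⟨v, rfl⟩)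
  have hannw : ∀ t ∈ maximalIdeal A, t • w ∈ z • (⊤ : Submodule A M) := by
    intro t ht
    obtain ⟨ut, hut⟩ := my_mem_smul_top_iff.mp (hannu t ht)
    -- hut : x • ut = t • u
    refine my_mem_smul_top_iff.mpr ⟨ut, hxr ?_⟩
    -- x • (z • ut) = x • (t • w)
    calc x • z • ut = z • x • ut := smul_comm _ _ _
    _ = z • t • u := by rw [hut]
    _ = t • (z • u) := smul_comm _ _ _
    _ = t • (x • w) := by rw [hw]
    _ = x • t • w := smul_comm _ _ _
  intro r hr hreg
  have : r • (Submodule.Quotient.mk w : QuotSMulTop z M) = 0 := by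
    rw [← Submodule.Quotient.mk_smul, Submodule.Quotient.mk_eq_zero]
    exact hannw r hr
  have hw0 : (Submodule.Quotient.mk w : QuotSMulTop z M) ≠ 0 := fun hh =>
    hwmem ((Submodule.Quotient.mk_eq_zero _).mp hh)
  exact hw0 (regKills hreg this)

lemma noReg_congr [IsLocalRing A] {W W' : Type} [AddCommGroup W] [Module A W]
    [AddCommGroup W'] [Module A W'] (e : W ≃ₗ[A] W')
    (h : ∀ r ∈ maximalIdeal A, ¬ IsSMulRegular W r) :
    ∀ r ∈ maximalIdeal A, ¬ IsSMulRegular W' r :=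
  fun r hr hreg => h r hr ((e.isSMulRegular_congr r).mpr hreg)

lemma ofList_append_singleton (a : List A) (x : A) :
    Ideal.ofList (a ++ [x]) = Ideal.ofList (x :: a) := by
  rw [Ideal.ofList_append, Ideal.ofList_singleton, Ideal.ofList_cons, sup_comm]

lemma lemB [IsLocalRing A] [IsNoetherianRing A] :
    ∀ (n : ℕ) (M : Type) [AddCommGroup M] [Module A M] [IsNoetherian A M]
      (xs ys : List A), xs.length = n → ys.length = n →
      (∀ r ∈ xs, r ∈ maximalIdeal A) → (∀ r ∈ ys, r ∈ maximalIdeal A) →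
      IsWeaklyRegular M xs → IsWeaklyRegular M ys →
      (∀ r ∈ maximalIdeal A, ¬ IsSMulRegular (M ⧸ (Ideal.ofList xs • ⊤ : Submodule A M)) r) →
      (∀ r ∈ maximalIdeal A, ¬ IsSMulRegular (M ⧸ (Ideal.ofList ys • ⊤ : Submodule A M)) r) := by
  intro n
  induction n with
  | zero =>
    intro M _ _ _ xs ys hlx hly _ _ _ _ hno
    rw [List.length_eq_zero_iff] at hlx hly
    subst hlx; subst hly
    exact hno
  | succ n ih =>
    intro M _ _ _ xs ys hlx hly hxm hym hxr hyr hno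
    have hxne : xs ≠ [] := by rintro rfl; simp at hlx
    have hyne : ys ≠ [] := by rintro rfl; simp at hly
    set a := xs.dropLast with ha
    set x := xs.getLast hxne with hxdef
    have hxs : a ++ [x] = xs := List.dropLast_append_getLast hxne
    set b := ys.dropLast with hb
    set y := ys.getLast hyne with hydef
    have hys : b ++ [y] = ys := List.dropLast_append_getLast hyne
    have hla : a.length = n := by
      rw [ha, List.length_dropLast, hlx]; rfl
    have hlb : b.length = n := by
      rw [hb, List.length_dropLast, hly]; rfl
    have ham : ∀ r ∈ a, r ∈ maximalIdeal A :=
      fun r hr => hxm r (List.dropLast_subset xs hr)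
    have hbm : ∀ r ∈ b, r ∈ maximalIdeal A :=
      fun r hr => hym r (List.dropLast_subset ys hr)
    have hxmem : x ∈ maximalIdeal A := hxm x (List.getLast_mem hxne)
    have hymem : y ∈ maximalIdeal A := hym y (List.getLast_mem hyne)
    rw [← hxs] at hxr
    rw [← hys] at hyr
    obtain ⟨hWRa, hWRx1⟩ := (isWeaklyRegular_append_iff M a [x]).mp hxr
    obtain ⟨hWRb, hWRy1⟩ := (isWeaklyRegular_append_iff M b [y]).mp hyr
    have hxrega := (isWeaklyRegular_singleton_iff _ x).mp hWRx1
    have hyregb := (isWeaklyRegular_singleton_iff _ y).mp hWRy1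
    obtain ⟨z, hzm, hzrega, hzregb⟩ := dichotomy hxmem hymem hxrega hyregb
    -- transport hno to QuotSMulTop x (M ⧸ ofList a • ⊤)
    rw [← hxs, ofList_append_singleton] at hno
    have hno2 := noReg_congr
      (Submodule.quotOfListConsSMulTopEquivQuotSMulTopOuter M x a) hno
    have hno3 := lemA hxrega hzrega hzm hno2
    have hno4 := noReg_congr
      (Submodule.quotOfListConsSMulTopEquivQuotSMulTopOuter M z a).symm hno3
    have hno5 := noReg_congr
      (Submodule.quotOfListConsSMulTopEquivQuotSMulTopInner M z a) hno4
    -- weakly regular sequences on M' := QuotSMulTop z M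
    have hWRaz : IsWeaklyRegular M (a ++ [z]) :=
      (isWeaklyRegular_append_iff M a [z]).mpr
        ⟨hWRa, (isWeaklyRegular_singleton_iff _ z).mpr hzrega⟩
    have hWRbz : IsWeaklyRegular M (b ++ [z]) :=
      (isWeaklyRegular_append_iff M b [z]).mpr
        ⟨hWRb, (isWeaklyRegular_singleton_iff _ z).mpr hzregb⟩
    have hWRza := IsLocalRing.isWeaklyRegular_of_perm_of_subset_maximalIdeal
      hWRaz (List.perm_append_singleton z a)
      (by
        intro r hr
        rcases List.mem_append.mp hr with h | h
        · exact ham r h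
        · rw [List.mem_singleton.mp h]; exact hzm)
    have hWRzb := IsLocalRing.isWeaklyRegular_of_perm_of_subset_maximalIdeal
      hWRbz (List.perm_append_singleton z b)
      (by
        intro r hr
        rcases List.mem_append.mp hr with h | h
        · exact hbm r h
        · rw [List.mem_singleton.mp h]; exact hzm)
    have hWRa' := ((isWeaklyRegular_cons_iff M z a).mp hWRza).2
    have hWRb' := ((isWeaklyRegular_cons_iff M z b).mp hWRzb).2
    have IH := ih (QuotSMulTop z M) a b hla hlb ham hbm hWRa' hWRb' hno5
    have hno6 := noReg_congr
      (Submodule.quotOfListConsSMulTopEquivQuotSMulTopInner M z b).symm IH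
    have hno7 := noReg_congr
      (Submodule.quotOfListConsSMulTopEquivQuotSMulTopOuter M z b) hno6
    have hno8 := lemA hzregb hyregb hymem hno7
    have hno9 := noReg_congr
      (Submodule.quotOfListConsSMulTopEquivQuotSMulTopOuter M y b).symm hno8
    rw [← hys, ofList_append_singleton]
    exact hno9

/-- Nakayama-type step. -/
lemma top_ne_smul_single [IsLocalRing A] {M : Type} [AddCommGroup M] [Module A M]
    [IsNoetherian A M] [Nontrivial M] {r : A} (hrm : r ∈ maximalIdeal A) :
    (⊤ : Submodule A M) ≠ (Ideal.span {r} : Ideal A) • ⊤ := by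
  intro htop
  have h1 : (⊤ : Submodule A M) ≤ (maximalIdeal A) • ⊤ := by
    nth_rewrite 1 [htop]
    exact Submodule.smul_mono_left ((Ideal.span_singleton_le_iff_mem _).mpr hrm)
  have h2 := Submodule.eq_bot_of_le_smul_of_le_jacobson_bot (maximalIdeal A) ⊤
    (IsNoetherian.noetherian ⊤) h1
    (by rw [IsLocalRing.jacobson_eq_maximalIdeal ⊥ bot_ne_top])
  exact not_subsingleton M ((Submodule.subsingleton_iff A).mp
    (subsingleton_of_bot_eq_top h2.symm))

lemma exists_noReg_seq [IsLocalRing A] [IsNoetherianRing A] (M : Type)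
    [AddCommGroup M] [Module A M] [IsNoetherian A M] [Nontrivial M] :
    ∃ zs : List A, (∀ r ∈ zs, r ∈ maximalIdeal A) ∧ IsWeaklyRegular M zs ∧
      (∀ r ∈ maximalIdeal A,
        ¬ IsSMulRegular (M ⧸ (Ideal.ofList zs • ⊤ : Submodule A M)) r) := by
  suffices h : ∀ N : Submodule A M, ∀ xs : List A,
      (∀ r ∈ xs, r ∈ maximalIdeal A) → IsWeaklyRegular M xs →
      Ideal.ofList xs • ⊤ = N → N ≠ ⊤ →
      ∃ zs : List A, (∀ r ∈ zs, r ∈ maximalIdeal A) ∧ IsWeaklyRegular M zs ∧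
        (∀ r ∈ maximalIdeal A,
          ¬ IsSMulRegular (M ⧸ (Ideal.ofList zs • ⊤ : Submodule A M)) r) by
    refine h ⊥ [] (by simp) (IsWeaklyRegular.nil A M) (by rw [Ideal.ofList_nil, bot_smul]) ?_
    intro hbt
    exact not_subsingleton M ((Submodule.subsingleton_iff A).mp
      (subsingleton_of_bot_eq_top hbt))
  intro N
  induction N using IsNoetherian.induction with
  | _ N ihN =>
    intro xs hxm hWR hN hNtop
    by_cases hex : ∃ r ∈ maximalIdeal A,
        IsSMulRegular (M ⧸ (Ideal.ofList xs • ⊤ : Submodule A M)) r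
    · obtain ⟨r, hrm, hrreg⟩ := hex
      have hrregN : IsSMulRegular (M ⧸ N) r := by rw [← hN]; exact hrreg
      haveI hNnt : Nontrivial (M ⧸ N) :=
        Submodule.Quotient.nontrivial_iff.mpr hNtop
      have hsub : ¬ ((Ideal.span {r} : Ideal A) • (⊤ : Submodule A M) ≤ N) := by
        intro hle
        have hz : ∀ mm : M ⧸ N, r • mm = 0 := by
          intro mm
          obtain ⟨w, rfl⟩ := N.mkQ_surjective mm
          show r • Submodule.Quotient.mk w = 0
          rw [← Submodule.Quotient.mk_smul, Submodule.Quotient.mk_eq_zero]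
          refine hle ?_
          rw [Submodule.ideal_span_singleton_smul]
          exact Submodule.smul_mem_pointwise_smul w r ⊤ trivial
        obtain ⟨mm, hmm⟩ := exists_ne (0 : M ⧸ N)
        exact hmm (regKills hrregN (hz mm))
      set N' := N ⊔ (Ideal.span {r} : Ideal A) • (⊤ : Submodule A M) with hN'
      have hlt : N < N' := by
        refine lt_of_le_of_ne le_sup_left (fun h => hsub ?_)
        have h2 : (Ideal.span {r} : Ideal A) • (⊤ : Submodule A M) ≤ N' := le_sup_right
        rw [← h] at h2
        exact h2
      have hN'top : N' ≠ ⊤ := by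
        intro htop
        -- pass to M ⧸ N and use Nakayama
        have hmap : (Ideal.span {r} : Ideal A) • (⊤ : Submodule A (M ⧸ N)) = ⊤ := by
          have := congrArg (Submodule.map N.mkQ) htop
          rw [Submodule.map_sup, Submodule.map_smul''] at this
          rw [show Submodule.map N.mkQ N = ⊥ from ?_, bot_sup_eq] at this
          · rw [Submodule.map_top, Submodule.range_mkQ] at this
            exact this
          · rw [eq_bot_iff]
            rintro z ⟨w, hw, rfl⟩
            simpa using (Submodule.Quotient.mk_eq_zero N).mpr hw
        have h1 : (⊤ : Submodule A (M ⧸ N)) ≤ (maximalIdeal A) • ⊤ := by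
          nth_rewrite 1 [← hmap]
          exact Submodule.smul_mono_left ((Ideal.span_singleton_le_iff_mem _).mpr hrm)
        have h2 := Submodule.eq_bot_of_le_smul_of_le_jacobson_bot (maximalIdeal A) ⊤
          (IsNoetherian.noetherian ⊤) h1
          (by rw [IsLocalRing.jacobson_eq_maximalIdeal ⊥ bot_ne_top])
        exact not_subsingleton (M ⧸ N) ((Submodule.subsingleton_iff A).mp
          (subsingleton_of_bot_eq_top h2.symm))
      refine ihN N' hlt (xs ++ [r]) ?_ ?_ ?_ hN'top
      · intro t ht
        rcases List.mem_append.mp ht with h | h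
        · exact hxm t h
        · rw [List.mem_singleton.mp h]; exact hrm
      · exact (isWeaklyRegular_append_iff (R := A) M xs [r]).mpr
          ⟨hWR, (isWeaklyRegular_singleton_iff (R := A) _ r).mpr hrreg⟩
      · rw [Ideal.ofList_append, Ideal.ofList_singleton, Submodule.sup_smul, hN]
    · push_neg at hex
      exact ⟨xs, hxm, hWR, hex⟩

lemma length_bound [IsLocalRing A] [IsNoetherianRing A] (M : Type)
    [AddCommGroup M] [Module A M] [IsNoetherian A M] [Nontrivial M] :
    ∃ d : ℕ, ∀ rs : List A, (∀ r ∈ rs, r ∈ maximalIdeal A) →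
      IsWeaklyRegular M rs → rs.length ≤ d := by
  obtain ⟨zs, hzm, hzWR, hzno⟩ := exists_noReg_seq (A := A) M
  refine ⟨zs.length, ?_⟩
  intro rs hrm hrWR
  by_contra hlen
  push_neg at hlen
  set d := zs.length with hd
  have htake : (rs.take d).length = d := by
    rw [List.length_take]
    exact min_eq_left hlen.le
  have hWRsplit := (isWeaklyRegular_append_iff M (rs.take d) (rs.drop d)).mp
    (by rw [List.take_append_drop]; exact hrWR)
  have htakemem : ∀ r ∈ rs.take d, r ∈ maximalIdeal A :=
    fun r hr => hrm r (List.take_subset d rs hr)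
  have hno := lemB d M zs (rs.take d) rfl htake hzm htakemem hzWR hWRsplit.1 hzno
  have hreg := hrWR.regular_mod_prev d hlen
  exact hno rs[d] (hrm _ (List.getElem_mem hlen)) hreg


end Infrastructure

section Transfer

variable {R : Type} [CommRing R]

lemma transfer_fwd [IsNoetherianRing R] (P : Ideal R) [P.IsPrime] (J : Ideal R)
    (h : P ∈ associatedPrimes R (R ⧸ J)) :
    maximalIdeal (Localization.AtPrime P) ∈
      associatedPrimes (Localization.AtPrime P)
        ((Localization.AtPrime P) ⧸ J.map (algebraMap R (Localization.AtPrime P))) := by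
  set A := Localization.AtPrime P
  set f := algebraMap R A with hf
  obtain ⟨hPp, xb, hann⟩ := ap_dest h
  obtain ⟨x, rfl⟩ := Submodule.Quotient.mk_surjective J xb
  refine ap_mk (maximalIdeal.isMaximal A).isPrime (x := Submodule.Quotient.mk (f x)) ?_
  have hmapm : P.map f = maximalIdeal A := Localization.AtPrime.map_eq_maximalIdeal
  ext e
  rw [Submodule.mem_annihilator_span_singleton, ← hmapm]
  constructor
  · -- e ∈ P.map f → e • mk (f x) = 0
    intro he
    -- reduce to generators of P.map f
    have : P.map f ≤ ((Localization.AtPrime P) ∙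
        (Submodule.Quotient.mk (f x) : A ⧸ (J.map f : Ideal A))).annihilator := by
      rw [Ideal.map_le_iff_le_comap]
      intro a ha
      rw [Ideal.mem_comap, Submodule.mem_annihilator_span_singleton,
        ← Submodule.Quotient.mk_smul, Submodule.Quotient.mk_eq_zero]
      have hax : a * x ∈ J := by
        have := hann ▸ ha
        rw [Submodule.mem_annihilator_span_singleton, ← Submodule.Quotient.mk_smul,
          Submodule.Quotient.mk_eq_zero] at this
        simpa using this
      have : f a • f x = f (a * x) := by rw [map_mul]; rfl
      rw [this]
      exact Ideal.mem_map_of_mem f hax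
    exact (Submodule.mem_annihilator_span_singleton _ e).mp (this he)
  · intro he
    -- he : e • mk (f x) = 0
    rw [← Submodule.Quotient.mk_smul, Submodule.Quotient.mk_eq_zero] at he
    obtain ⟨⟨rnum, s⟩, rfl⟩ := IsLocalization.mk'_surjective P.primeCompl e
    have he' : IsLocalization.mk' A rnum s • f x ∈ (J.map f : Ideal A) := he
    rw [smul_eq_mul] at he'
    obtain ⟨⟨j, t⟩, hjt⟩ := (IsLocalization.mem_map_algebraMap_iff P.primeCompl A).mp he'
    -- hjt : (mk' rnum s * f x) * f t = f j
    have hspec : IsLocalization.mk' A rnum s * f s = f rnum :=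
      IsLocalization.mk'_spec A rnum s
    have hjt' : IsLocalization.mk' A rnum s * f x * f (t : R) = f (j : R) := hjt
    have heq : f (rnum * x * (t : R)) = f ((j : R) * (s : R)) := by
      rw [map_mul, map_mul, map_mul, ← hspec, ← hjt']
      ring
    obtain ⟨c, hc⟩ := (IsLocalization.eq_iff_exists P.primeCompl A).mp heq
    -- hc : c * (rnum * x * t) = c * (j * s)
    have hcj : ((c : R) * t * rnum) * x ∈ J := by
      have : (c : R) * (rnum * x * t) ∈ J := by
        rw [hc]
        exact J.mul_mem_left _ (J.mul_mem_right _ j.2)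
      have heq2 : ((c : R) * t * rnum) * x = (c : R) * (rnum * x * t) := by ring
      rw [heq2]; exact this
    have hmem : (c : R) * t * rnum ∈ P := by
      have : ((c : R) * t * rnum) ∈ (R ∙ (Submodule.Quotient.mk x : R ⧸ J)).annihilator := by
        rw [Submodule.mem_annihilator_span_singleton, ← Submodule.Quotient.mk_smul,
          Submodule.Quotient.mk_eq_zero]
        simpa using hcj
      exact hann ▸ this
    have hrnum : rnum ∈ P := by
      rcases hPp.mem_or_mem hmem with h | h
      · rcases hPp.mem_or_mem h with h' | h'
        · exact absurd h' c.2
        · exact absurd h' t.2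
      · exact h
    show IsLocalization.mk' A rnum s ∈ Ideal.map f P
    rw [IsLocalization.mk'_eq_mul_mk'_one]
    exact Ideal.mul_mem_right _ _ (Ideal.mem_map_of_mem f hrnum)

lemma transfer_bwd [IsNoetherianRing R] (P : Ideal R) [P.IsPrime] (J : Ideal R)
    (h : maximalIdeal (Localization.AtPrime P) ∈
      associatedPrimes (Localization.AtPrime P)
        ((Localization.AtPrime P) ⧸ J.map (algebraMap R (Localization.AtPrime P)))) :
    P ∈ associatedPrimes R (R ⧸ J) := by
  set A := Localization.AtPrime P
  set f := algebraMap R A with hf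
  haveI : IsNoetherianRing A := IsLocalization.isNoetherianRing P.primeCompl A inferInstance
  obtain ⟨hmp, zb, hann⟩ := ap_dest h
  obtain ⟨zA, rfl⟩ := Submodule.Quotient.mk_surjective _ zb
  obtain ⟨⟨xn, s⟩, hmk⟩ := IsLocalization.mk'_surjective P.primeCompl zA
  have hfs : IsUnit (f (s : R)) := IsLocalization.map_units A s
  have hfsinv : (f (s : R)) * ((hfs.unit⁻¹ : _ˣ) : A) = 1 := by
    exact IsUnit.mul_val_inv hfs
  have hmem : ∀ c : A,
      c • (Submodule.Quotient.mk zA : A ⧸ (J.map f : Ideal A)) = 0 ↔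
        c ∈ maximalIdeal A := by
    intro c
    rw [← Submodule.mem_annihilator_span_singleton, ← hann]
  have hann' : ∀ e : A,
      e • (Submodule.Quotient.mk (f xn) : A ⧸ (J.map f : Ideal A)) = 0 ↔
        e ∈ maximalIdeal A := by
    intro e
    have hz' : (Submodule.Quotient.mk (f xn) : A ⧸ (J.map f : Ideal A)) =
        f (s : R) • Submodule.Quotient.mk zA := by
      rw [← Submodule.Quotient.mk_smul, smul_eq_mul, ← hmk,
        mul_comm, IsLocalization.mk'_spec]
    rw [hz', smul_smul, hmem (e * f (s : R))]
    constructor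
    · intro hsm
      have h2 := Ideal.mul_mem_right ((hfs.unit⁻¹ : _ˣ) : A) _ hsm
      rwa [mul_assoc, hfsinv, mul_one] at h2
    · intro hsm
      exact Ideal.mul_mem_right _ _ hsm
  have hPfg : P.FG := IsNoetherian.noetherian P
  obtain ⟨T, hT⟩ := hPfg
  have hchoice : ∀ a : R, a ∈ T → ∃ u : R, u ∈ P.primeCompl ∧ u * (a * xn) ∈ J := by
    intro a ha
    have haP : a ∈ P := hT ▸ Ideal.subset_span ha
    have hfa : f a ∈ maximalIdeal A := by
      rw [← Localization.AtPrime.map_eq_maximalIdeal]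
      exact Ideal.mem_map_of_mem f haP
    have h3 := (hann' (f a)).mpr hfa
    rw [← Submodule.Quotient.mk_smul, Submodule.Quotient.mk_eq_zero,
      smul_eq_mul, ← map_mul] at h3
    obtain ⟨⟨j, t⟩, hjt⟩ := (IsLocalization.mem_map_algebraMap_iff P.primeCompl A).mp h3
    have hjt' : f ((a * xn) * (t : R)) = f (j : R) := by
      rw [map_mul]; exact hjt
    obtain ⟨c, hc⟩ := (IsLocalization.eq_iff_exists P.primeCompl A).mp hjt'
    refine ⟨(c : R) * t, Submonoid.mul_mem _ c.2 t.2, ?_⟩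
    have heq : (c : R) * t * (a * xn) = (c : R) * (a * xn * t) := by ring
    rw [heq, hc]
    exact J.mul_mem_left _ j.2
  choose g hg1 hg2 using hchoice
  set c := T.attach.prod (fun a => g a.1 a.2) with hcdef
  have hcP : c ∈ P.primeCompl := Submonoid.prod_mem _ (fun a _ => hg1 a.1 a.2)
  have hckill : ∀ a ∈ T, a * (c * xn) ∈ J := by
    intro a ha
    have hsplit : c = g a ha * (T.attach.erase ⟨a, ha⟩).prod (fun b => g b.1 b.2) := by
      rw [hcdef, ← Finset.mul_prod_erase T.attach _ (Finset.mem_attach T ⟨a, ha⟩)]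
    rw [hsplit]
    have h2 := hg2 a ha
    have heq : a * (g a ha * (T.attach.erase ⟨a, ha⟩).prod (fun b => g b.1 b.2) * xn) =
        ((T.attach.erase ⟨a, ha⟩).prod (fun b => g b.1 b.2)) * (g a ha * (a * xn)) := by
      ring
    rw [heq]
    exact J.mul_mem_left _ h2
  refine ap_mk inferInstance (x := Submodule.Quotient.mk (c * xn)) ?_
  ext b
  rw [Submodule.mem_annihilator_span_singleton, ← Submodule.Quotient.mk_smul,
    Submodule.Quotient.mk_eq_zero]
  constructor
  · intro hb
    rw [← hT] at hb
    induction hb using Submodule.span_induction with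
    | mem w hw => exact hckill w hw
    | zero => simpa using J.zero_mem
    | add w v _ _ hw hv =>
      have : (w + v) • (c * xn) = w • (c * xn) + v • (c * xn) := add_smul _ _ _
      rw [this]; exact J.add_mem hw hv
    | smul r w _ hw =>
      have : (r • w) • (c * xn) = r • (w • (c * xn)) := smul_assoc _ _ _
      rw [this]; exact J.smul_mem _ hw
  · intro hb
    have h4 : f (b * (c * xn)) ∈ (J.map f : Ideal A) := by
      have : b • (c * xn) = b * (c * xn) := rfl
      rw [this] at hb
      exact Ideal.mem_map_of_mem f hb
    have h5 : (f b * f c) • (Submodule.Quotient.mk (f xn) : A ⧸ (J.map f : Ideal A)) = 0 := by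
      rw [← Submodule.Quotient.mk_smul, Submodule.Quotient.mk_eq_zero, smul_eq_mul]
      rw [← map_mul, ← map_mul]
      have : b * c * xn = b * (c * xn) := by ring
      rw [this]
      exact h4
    rw [← map_mul, hann' (f (b * c))] at h5
    have h6 : b * c ∈ P := by
      have := Ideal.mem_comap.mpr h5
      rw [← IsLocalization.AtPrime.comap_maximalIdeal A P]; exact this
    rcases (Ideal.IsPrime.mem_or_mem inferInstance h6) with h | h
    · exact h
    · exact absurd h hcP

end Transfer

section Helpers

lemma sSup_nat_zero {S : Set ℕ} (h : ∀ n ∈ S, n = 0) : sSup S = 0 := by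
  have hsub : S ⊆ {0} := fun n hn => h n hn
  rcases Set.subset_singleton_iff_eq.mp hsub with h' | h'
  · rw [h']; exact csSup_empty
  · rw [h']; exact csSup_singleton 0

end Helpers

/-- The depth of a module `M` with respect to an ideal `J`: the supremum of lengths of
`M`-regular sequences with entries in `J`. -/
noncomputable def ringDepth {R : Type} [CommRing R] (J : Ideal R)
    (M : Type) [AddCommGroup M] [Module R M] : ℕ :=
  sSup {len : ℕ | ∃ rs : List R, rs.length = len ∧ (∀ r ∈ rs, r ∈ J) ∧
    RingTheory.Sequence.IsRegular M rs}

/-- If for all primes `P ⊇ I` the function `k ↦ depth (R_P / I^k R_P)` is non-increasing,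
then `I` satisfies the persistence property. -/
theorem stmt1 {R : Type} [CommRing R] [IsNoetherianRing R] (I : Ideal R)
    (hmono : ∀ (P : Ideal R) (_ : P.IsPrime), I ≤ P → ∀ k : ℕ, 1 ≤ k →
      ringDepth (IsLocalRing.maximalIdeal (Localization.AtPrime P))
        (Localization.AtPrime P ⧸
          (I ^ (k + 1)).map (algebraMap R (Localization.AtPrime P))) ≤
      ringDepth (IsLocalRing.maximalIdeal (Localization.AtPrime P))
        (Localization.AtPrime P ⧸
          (I ^ k).map (algebraMap R (Localization.AtPrime P))))
    (k : ℕ) (hk1 : 1 ≤ k) (P : Ideal R) (hP : P ∈ associatedPrimes R (R ⧸ I ^ k)) :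
    P ∈ associatedPrimes R (R ⧸ I ^ (k + 1)) := by
  have hPp : P.IsPrime := hP.isPrime
  haveI := hPp
  set A := Localization.AtPrime P with hA
  set f := algebraMap R A with hf
  haveI : IsNoetherianRing A :=
    IsLocalization.isNoetherianRing P.primeCompl A inferInstance
  -- I^k ≤ P
  have hIk : I ^ k ≤ P := by
    have h1 : I ^ k ≤ (⊤ : Submodule R (R ⧸ I ^ k)).annihilator := by
      intro a ha
      rw [Submodule.mem_annihilator]
      intro mm _
      obtain ⟨x, rfl⟩ := Submodule.Quotient.mk_surjective _ mm
      rw [← Submodule.Quotient.mk_smul, Submodule.Quotient.mk_eq_zero]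
      exact Ideal.mul_mem_right x _ ha
    exact h1.trans hP.annihilator_le
  have hIP : I ≤ P := hPp.le_of_pow_le hIk
  have hIk1 : I ^ (k + 1) ≤ P := (Ideal.pow_le_pow_right (Nat.le_succ k)).trans hIk
  -- transfer forward at level k
  have hmA := transfer_fwd P (I ^ k) hP
  -- main reduction
  suffices hgoal : maximalIdeal A ∈
      associatedPrimes A (A ⧸ (I ^ (k + 1)).map f) from
    transfer_bwd P (I ^ (k + 1)) hgoal
  by_contra hno
  have hex : ∃ r ∈ maximalIdeal A,
      IsSMulRegular (A ⧸ (I ^ (k + 1)).map f) r := by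
    by_contra hc
    push_neg at hc
    exact hno (keyLem hc)
  obtain ⟨r, hrm, hrreg⟩ := hex
  haveI : Nontrivial (A ⧸ (I ^ (k + 1)).map f) := by
    refine Submodule.Quotient.nontrivial_iff.mpr (lt_top_iff_ne_top.mp ?_)
    have hle : (I ^ (k + 1)).map f ≤ maximalIdeal A := by
      rw [← Localization.AtPrime.map_eq_maximalIdeal]
      exact Ideal.map_mono hIk1
    exact lt_of_le_of_lt hle (lt_top_iff_ne_top.mpr (maximalIdeal.isMaximal A).ne_top)
  -- depth at level k is zero
  have hS1 : ringDepth (maximalIdeal A) (A ⧸ (I ^ k).map f) = 0 := by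
    apply sSup_nat_zero
    rintro n ⟨rs, hlen, hmem, hreg⟩
    by_contra hn0
    have hne : rs ≠ [] := by
      intro h; rw [h] at hlen; exact hn0 hlen.symm
    obtain ⟨r0, rest, rfl⟩ := List.exists_cons_of_ne_nil hne
    have hr0 := ((isRegular_cons_iff _ r0 rest).mp hreg).1
    exact keyLem' hmA r0 (hmem r0 (List.mem_cons_self)) hr0
  have hmono' := hmono P hPp hIP k hk1
  rw [hS1] at hmono'
  have hS2 : ringDepth (maximalIdeal A) (A ⧸ (I ^ (k + 1)).map f) = 0 :=
    Nat.le_zero.mp hmono'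
  -- but depth at level k+1 is at least 1 : contradiction
  have h1mem : 1 ∈ {len : ℕ | ∃ rs : List A, rs.length = len ∧
      (∀ r' ∈ rs, r' ∈ maximalIdeal A) ∧
      RingTheory.Sequence.IsRegular (A ⧸ (I ^ (k + 1)).map f) rs} := by
    refine ⟨[r], rfl, ?_, ?_⟩
    · intro r' hr'
      rw [List.mem_singleton.mp hr']
      exact hrm
    · refine ⟨(isWeaklyRegular_singleton_iff _ r).mpr hrreg, ?_⟩
      rw [Ideal.ofList_singleton]
      exact top_ne_smul_single hrm
  obtain ⟨d, hd⟩ := length_bound (A := A) (A ⧸ (I ^ (k + 1)).map f)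
  have hbdd : BddAbove {len : ℕ | ∃ rs : List A, rs.length = len ∧
      (∀ r' ∈ rs, r' ∈ maximalIdeal A) ∧
      RingTheory.Sequence.IsRegular (A ⧸ (I ^ (k + 1)).map f) rs} := by
    refine ⟨d, ?_⟩
    rintro n ⟨rs, hlen, hmem, hreg⟩
    exact hlen ▸ hd rs hmem hreg.toIsWeaklyRegular
  have hge := le_csSup hbdd h1mem
  have : (1 : ℕ) ≤ ringDepth (maximalIdeal A) (A ⧸ (I ^ (k + 1)).map f) := hge
  omega
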